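/- In the diamond-lattice example with V = {0,b,1}, A = M₃, F(x) = a⊗x, and L = {0,1} as above, the V-frame J[H, L] on the three homomorphisms {f₁, f₇, f₈} with relation r(α,β) = ⋀_{x∈A}(β(x) →_L α(F(x))) (where 0 →_L 0 = 0 →_L 1 = 1 →_L 1 = 1 and 1 →_L 0 = 0, residuation computed in V) is given by: r(fᵢ, f₁) = 1 for all i ∈ {1,7,8}; r(f₈, f₇) = 1; and r(f₁,f₇) = r(f₁,f₈) = r(f₇,f₇) = r(f₇,f₈) = r(f₈,f₈) = 0. Consequently, the evaluation map μ_H : A → L^{\{f₁,f₇,f₈\}}, x ↦ (α ↦ α(x)), is not injective, since μ_H(b) = μ_H(c) = μ_H(1). -/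

import Mathlib

/-- The five-element diamond lattice `M₃ = {0, a, b, c, 1}`. -/
inductive M3 : Type
  | z | a | b | c | o
  deriving DecidableEq

instance : Fintype M3 :=
  ⟨⟨↑[M3.z, M3.a, M3.b, M3.c, M3.o], by decide⟩, fun x => by cases x <;> decide⟩

namespace M3

/-- The order of the diamond lattice as a Boolean-valued relation. -/
def leB : M3 → M3 → Bool
  | .z, _ => true
  | _, .o => true
  | x, y => x == y

instance : LE M3 := ⟨fun x y => leB x y = true⟩

instance : DecidableRel ((· ≤ ·) : M3 → M3 → Prop) :=
  fun x y => inferInstanceAs (Decidable (leB x y = true))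

instance : PartialOrder M3 where
  le := (· ≤ ·)
  le_refl := by decide
  le_trans := by decide
  le_antisymm := by decide

instance : Lattice M3 where
  sup x y := if leB x y then y else if leB y x then x else .o
  inf x y := if leB x y then x else if leB y x then y else .z
  le_sup_left := by decide
  le_sup_right := by decide
  sup_le := by decide
  inf_le_left := by decide
  inf_le_right := by decide
  le_inf := by decide

instance : BoundedOrder M3 where
  top := .o
  bot := .z
  le_top := by decide
  bot_le := by decide

noncomputable instance : CompleteLattice M3 := Fintype.toCompleteLattice M3

/-- The quantale multiplication on `M₃`. -/
def mul : M3 → M3 → M3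
  | .z, _ => .z
  | _, .z => .z
  | .a, .a => .z
  | .a, _ => .a
  | .b, x => x
  | .c, .a => .a
  | .c, _ => .o
  | .o, .a => .a
  | .o, _ => .o

/-- Membership in the three-element subquantale `V = {0, b, 1}`. -/
def inV (x : M3) : Prop := x = M3.z ∨ x = M3.b ∨ x = M3.o

/-- The tense operator `F(x) = a ⊗ x`. -/
def F (x : M3) : M3 := mul .a x

end M3

/-- Membership in the two-element submodule `L = {0, 1}`. -/
def Lmem (x : M3) : Prop := x = M3.z ∨ x = M3.o

/-- The constant-`0` map. -/
def f1 : M3 → M3 := fun _ => M3.z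

/-- The map with `f₇(0) = f₇(a) = 0` and `f₇(b) = f₇(c) = f₇(1) = 1`. -/
def f7 : M3 → M3 := fun x => match x with
  | .b => .o | .c => .o | .o => .o | _ => .z

/-- The map with `f₈(0) = 0` and `f₈(x) = 1` for `x ≠ 0`. -/
def f8 : M3 → M3 := fun x => if x = M3.z then M3.z else M3.o

/-- The residual `a →_L b = ⨆{v ∈ V | v * a ≤ b}` of the submodule `L` over `V`. -/
noncomputable def resL (x y : M3) : M3 :=
  sSup {v : M3 | M3.inV v ∧ M3.mul v x ≤ y}

/-- The frame relation `r(α, β) = ⋀_{x ∈ A} (β(x) →_L α(F(x)))`. -/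
noncomputable def frameR (α β : M3 → M3) : M3 :=
  ⨅ x : M3, resL (β x) (α (M3.F x))

/-- The three-element carrier `{f₁, f₇, f₈}` of the frame `J[H, L]`. -/
def Hs : Set (M3 → M3) := {f1, f7, f8}

/-- The evaluation map `μ_H : A → L^{\{f₁,f₇,f₈\}}`, `x ↦ (α ↦ α(x))`. -/
def muH (x : M3) : Hs → M3 := fun α => α.1 x


lemma M3.z_le (x : M3) : M3.z ≤ x := by cases x <;> decide

lemma M3.le_o (x : M3) : x ≤ M3.o := by cases x <;> decide

lemma resL_eq_o (x y : M3) (h : M3.mul M3.o x ≤ y) : resL x y = M3.o :=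
  le_antisymm (sSup_le fun v _ => M3.le_o v)
    (le_sSup ⟨Or.inr (Or.inr rfl), h⟩)

lemma resL_eq_z (x y : M3) (hb : ¬ M3.mul M3.b x ≤ y) (ho : ¬ M3.mul M3.o x ≤ y) :
    resL x y = M3.z :=
  le_antisymm
    (sSup_le fun v hv => by
      rcases hv with ⟨(rfl | rfl | rfl), hm⟩
      · exact le_refl _
      · exact absurd hm hb
      · exact absurd hm ho)
    (M3.z_le _)

lemma frameR_eq_o (α β : M3 → M3) (h : ∀ x, M3.mul M3.o (β x) ≤ α (M3.F x)) :
    frameR α β = M3.o :=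
  le_antisymm (M3.le_o _)
    (le_iInf fun x => le_of_eq (resL_eq_o _ _ (h x)).symm)

lemma frameR_eq_z (α β : M3 → M3) (x : M3)
    (hb : ¬ M3.mul M3.b (β x) ≤ α (M3.F x))
    (ho : ¬ M3.mul M3.o (β x) ≤ α (M3.F x)) :
    frameR α β = M3.z :=
  le_antisymm ((iInf_le _ x).trans (le_of_eq (resL_eq_z _ _ hb ho)))
    (M3.z_le _)

open M3 in
/-- the values of the frame relation on `{f₁, f₇, f₈}`, and the
resulting non-injectivity of the evaluation map `μ_H`. -/
theorem stmt19 :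
    (frameR f1 f1 = M3.o ∧ frameR f7 f1 = M3.o ∧ frameR f8 f1 = M3.o ∧
      frameR f8 f7 = M3.o) ∧
    (frameR f1 f7 = M3.z ∧ frameR f1 f8 = M3.z ∧ frameR f7 f7 = M3.z ∧
      frameR f7 f8 = M3.z ∧ frameR f8 f8 = M3.z) ∧
    (muH M3.b = muH M3.c ∧ muH M3.c = muH M3.o) ∧
    ¬ Function.Injective muH := by
  have hbc : muH M3.b = muH M3.c := by
    funext α
    obtain ⟨f, hf⟩ := α
    rcases hf with rfl | rfl | rfl <;> rfl
  have hco : muH M3.c = muH M3.o := by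
    funext α
    obtain ⟨f, hf⟩ := α
    rcases hf with rfl | rfl | rfl <;> rfl
  refine ⟨⟨?_, ?_, ?_, ?_⟩, ⟨?_, ?_, ?_, ?_, ?_⟩, ⟨hbc, hco⟩, ?_⟩
  · exact frameR_eq_o _ _ (by decide)
  · exact frameR_eq_o _ _ (by decide)
  · exact frameR_eq_o _ _ (by decide)
  · exact frameR_eq_o _ _ (by decide)
  · exact frameR_eq_z _ _ M3.b (by decide) (by decide)
  · exact frameR_eq_z _ _ M3.b (by decide) (by decide)
  · exact frameR_eq_z _ _ M3.b (by decide) (by decide)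
  · exact frameR_eq_z _ _ M3.b (by decide) (by decide)
  · exact frameR_eq_z _ _ M3.a (by decide) (by decide)
  · intro h
    exact absurd (h hbc) (by decide)
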